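/- Let μ ∈ ℝ, a > 0, σ > 0, and ν the measure on (0,∞) with density ρ(r) = 2r exp(−(a/(2σ²))(r² − μ/a)²)/(√(πσ²/(2a)) erfc(−μ/(σ√(2a)))). Then ∫₀^∞ r² dν(r) = μ/a + √(2σ²/(πa)) · exp(−μ²/(2aσ²)) / erfc(−μ/√(2aσ²)). -/

import Mathlib

open MeasureTheory Filter Set Real

noncomputable def Ig (x : ℝ) : ℝ := ∫ u in Set.Ioi x, Real.exp (-u^2)

lemma gauss_integrable : Integrable (fun u : ℝ => Real.exp (-u^2)) := by
  have := integrable_exp_neg_mul_sq (b := 1) one_pos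
  simpa using this

lemma Ig_eq (x : ℝ) : Ig x = Ig 0 - ∫ t in (0:ℝ)..x, Real.exp (-t^2) := by
  rcases le_or_gt 0 x with h | h
  · have hu : Set.Ioc 0 x ∪ Set.Ioi x = Set.Ioi (0:ℝ) := Set.Ioc_union_Ioi_eq_Ioi h
    have hsplit : Ig 0 = (∫ t in Set.Ioc 0 x, Real.exp (-t^2)) + Ig x := by
      rw [Ig, Ig, ← hu, setIntegral_union (Set.Ioc_disjoint_Ioi le_rfl) measurableSet_Ioi
        gauss_integrable.integrableOn gauss_integrable.integrableOn]
    rw [intervalIntegral.integral_of_le h]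
    linarith
  · have hu : Set.Ioc x 0 ∪ Set.Ioi 0 = Set.Ioi x := Set.Ioc_union_Ioi_eq_Ioi h.le
    have hsplit : Ig x = (∫ t in Set.Ioc x 0, Real.exp (-t^2)) + Ig 0 := by
      rw [Ig, Ig, ← hu, setIntegral_union (Set.Ioc_disjoint_Ioi le_rfl) measurableSet_Ioi
        gauss_integrable.integrableOn gauss_integrable.integrableOn]
    rw [intervalIntegral.integral_symm, intervalIntegral.integral_of_le h.le]
    linarith

lemma Ig_hasDerivAt (x : ℝ) : HasDerivAt Ig (-(Real.exp (-x^2))) x := by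
  have hc : Continuous fun u : ℝ => Real.exp (-u^2) := by continuity
  have h1 : HasDerivAt (fun y => ∫ t in (0:ℝ)..y, Real.exp (-t^2)) (Real.exp (-x^2)) x :=
    intervalIntegral.integral_hasDerivAt_right (gauss_integrable.intervalIntegrable ..)
      (hc.stronglyMeasurableAtFilter _ _) hc.continuousAt
  have h2 : HasDerivAt (fun y => Ig 0 - ∫ t in (0:ℝ)..y, Real.exp (-t^2))
      (-(Real.exp (-x^2))) x := by
    have h := (hasDerivAt_const x (Ig 0)).sub h1; rw [zero_sub] at h; exact h
  exact h2.congr_of_eventuallyEq (Filter.Eventually.of_forall fun y => Ig_eq y)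

lemma Ig_nonneg (x : ℝ) : 0 ≤ Ig x :=
  setIntegral_nonneg measurableSet_Ioi (fun u _ => (Real.exp_pos _).le)

lemma Ig_pos (x : ℝ) : 0 < Ig x := by
  rw [Ig, setIntegral_pos_iff_support_of_nonneg_ae]
  · have : (Function.support fun u : ℝ => Real.exp (-u^2)) = Set.univ := by
      ext u; simp [Function.support, (Real.exp_pos _).ne']
    rw [this, Set.univ_inter]
    simp [Real.volume_Ioi]
  · exact Filter.Eventually.of_forall fun u => (Real.exp_pos _).le
  · exact gauss_integrable.integrableOn

lemma Ig_tendsto : Tendsto Ig atTop (nhds 0) := by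
  have h1 : ∀ᶠ x : ℝ in atTop, Ig x ≤ Real.exp (-x) := by
    filter_upwards [eventually_ge_atTop (1:ℝ)] with x hx
    have : Ig x ≤ ∫ u in Set.Ioi x, Real.exp (-u) := by
      apply setIntegral_mono_on gauss_integrable.integrableOn
        (exp_neg_integrableOn_Ioi x one_pos |>.congr_fun (fun u _ => by ring_nf) measurableSet_Ioi)
        measurableSet_Ioi
      intro u hu
      have hu1 : (1:ℝ) ≤ u := hx.trans (le_of_lt hu)
      have : u ≤ u^2 := by nlinarith
      exact Real.exp_le_exp.2 (by linarith)
    calc Ig x ≤ _ := this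
      _ = Real.exp (-x) := integral_exp_neg_Ioi x
  exact squeeze_zero' (Filter.Eventually.of_forall fun x => Ig_nonneg x) h1
    tendsto_exp_neg_atTop_nhds_zero

noncomputable def erfc (x : ℝ) : ℝ :=
  (2 / Real.sqrt Real.pi) * ∫ u in Set.Ioi x, Real.exp (-u^2)

theorem stmt_17 (μ a σ : ℝ) (ha : 0 < a) (hσ : 0 < σ) :
    ∫ r in Set.Ioi (0:ℝ),
        r^2 * (2 * r * Real.exp (-(a/(2*σ^2)) * (r^2 - μ/a)^2)
          / (Real.sqrt (Real.pi * σ^2 / (2*a)) * erfc (-μ/(σ * Real.sqrt (2*a)))))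
      = μ/a + Real.sqrt (2*σ^2/(Real.pi*a)) * Real.exp (-μ^2/(2*a*σ^2))
              / erfc (-μ / Real.sqrt (2*a*σ^2)) := by
  set c : ℝ := a/(2*σ^2) with hc_def
  set m : ℝ := μ/a with hm_def
  have hc : 0 < c := by positivity
  set s : ℝ := Real.sqrt c with hs_def
  have hs : 0 < s := Real.sqrt_pos.2 hc
  have hs2 : s^2 = c := Real.sq_sqrt hc.le
  have hP : 0 < Real.sqrt Real.pi := Real.sqrt_pos.2 Real.pi_pos
  have hP2 : (Real.sqrt Real.pi)^2 = Real.pi := Real.sq_sqrt Real.pi_pos.le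
  -- the antiderivative
  set F : ℝ → ℝ := fun r => -(1/(2*c)) * Real.exp (-c*(r^2-m)^2) - (m/s) * Ig (s*(r^2-m))
    with hF_def
  have hF : ∀ r : ℝ, HasDerivAt F (2*r^3 * Real.exp (-c*(r^2-m)^2)) r := by
    intro r
    have hu : HasDerivAt (fun r : ℝ => r^2 - m) (2*r) r := by
      simpa using (hasDerivAt_pow 2 r).sub_const m
    have hA : HasDerivAt (fun r : ℝ => -(1/(2*c)) * Real.exp (-c*(r^2-m)^2))
        (-(1/(2*c)) * (Real.exp (-c*(r^2-m)^2) * (-c * (2*(r^2-m)^1 * (2*r))))) r :=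
      (((hu.pow 2).const_mul (-c)).exp).const_mul _
    have hB : HasDerivAt (fun r : ℝ => (m/s) * Ig (s*(r^2-m)))
        ((m/s) * (-(Real.exp (-(s*(r^2-m))^2)) * (s * (2*r)))) r :=
      ((Ig_hasDerivAt (s*(r^2-m))).comp r (hu.const_mul s)).const_mul _
    have heq : -(s*(r^2-m))^2 = -c*(r^2-m)^2 := by rw [mul_pow, hs2]; ring
    rw [heq] at hB
    have := hA.sub hB
    refine this.congr_deriv ?_
    field_simp
    ring
  have hq : Tendsto (fun r : ℝ => r^2 - m) atTop atTop := by
    simpa [sub_eq_add_neg] using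
      tendsto_atTop_add_const_right atTop (-m) (tendsto_pow_atTop (two_ne_zero))
  have hFtop : Tendsto F atTop (nhds 0) := by
    have h1 : Tendsto (fun r : ℝ => -c*(r^2-m)^2) atTop atBot :=
      ((tendsto_pow_atTop two_ne_zero).comp hq).const_mul_atTop_of_neg (by linarith)
    have h2 : Tendsto (fun r : ℝ => -(1/(2*c)) * Real.exp (-c*(r^2-m)^2)) atTop (nhds 0) := by
      have := (Real.tendsto_exp_atBot.comp h1).const_mul (-(1/(2*c)))
      simpa using this
    have h3 : Tendsto (fun r : ℝ => (m/s) * Ig (s*(r^2-m))) atTop (nhds 0) := by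
      have hsc : Tendsto (fun r : ℝ => s*(r^2-m)) atTop atTop :=
        hq.const_mul_atTop hs
      have := (Ig_tendsto.comp hsc).const_mul (m/s)
      simpa using this
    simpa only [sub_zero] using h2.sub h3
  have hkey : ∫ r in Set.Ioi (0:ℝ), 2*r^3 * Real.exp (-c*(r^2-m)^2) = 0 - F 0 :=
    integral_Ioi_of_hasDerivAt_of_nonneg (hF 0).continuousAt.continuousWithinAt
      (fun x _ => hF x) (fun x hx => by have hx0 : (0:ℝ) < x := hx; positivity) hFtop
  -- sqrt identities
  have hsqrt2a : Real.sqrt (2*a) * s = a/σ := by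
    have h2a : (2*a)*(a/(2*σ^2)) = (a/σ)^2 := by field_simp
    rw [hs_def, hc_def, ← Real.sqrt_mul (by positivity), h2a, Real.sqrt_sq (by positivity)]
  have hprod : σ * Real.sqrt (2*a) * s = a := by
    rw [mul_assoc, hsqrt2a]; field_simp
  have hpos1 : (0:ℝ) < σ * Real.sqrt (2*a) := by positivity
  have harg1 : -μ/(σ * Real.sqrt (2*a)) = -(s*m) := by
    have hm' : m * a = μ := by rw [hm_def]; field_simp
    rw [div_eq_iff hpos1.ne']
    linear_combination m * hprod + hm' 
  have harg2 : -μ / Real.sqrt (2*a*σ^2) = -(s*m) := by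
    have : Real.sqrt (2*a*σ^2) = σ * Real.sqrt (2*a) := by
      rw [Real.sqrt_mul (by positivity), Real.sqrt_sq hσ.le, mul_comm]
    rw [this, harg1]
  have hsq1 : Real.sqrt (Real.pi * σ^2/(2*a)) = Real.sqrt Real.pi/(2*s) := by
    have h4 : Real.pi * σ^2/(2*a) = (Real.sqrt Real.pi/(2*s))^2 := by
      rw [div_pow, hP2, mul_pow, hs2, hc_def]; field_simp
    rw [h4, Real.sqrt_sq (by positivity)]
  have hsq2 : Real.sqrt (2*σ^2/(Real.pi*a)) = 1/(Real.sqrt Real.pi * s) := by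
    have h4 : 2*σ^2/(Real.pi*a) = (1/(Real.sqrt Real.pi * s))^2 := by
      rw [div_pow, one_pow, mul_pow, hP2, hs2, hc_def]; field_simp
    rw [h4, Real.sqrt_sq (by positivity)]
  have hexp : -μ^2/(2*a*σ^2) = -c*m^2 := by
    rw [hc_def, hm_def]; field_simp
  set J := Ig (-(s*m)) with hJ_def
  have hJ : 0 < J := Ig_pos _
  have herfc : erfc (-(s*m)) = 2/Real.sqrt Real.pi * J := rfl
  have hF0 : F 0 = -(1/(2*c)) * Real.exp (-c*m^2) - (m/s) * J := by
    rw [hF_def]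
    have e1 : ((0:ℝ)^2 - m)^2 = m^2 := by ring
    have e2 : s*((0:ℝ)^2 - m) = -(s*m) := by ring
    simp only [e1, e2, hJ_def]
  rw [harg1, harg2, herfc, hsq1, hsq2, hexp]
  have hrw : ∀ r : ℝ,
      r^2 * (2*r*Real.exp (-c*(r^2-m)^2)
        / (Real.sqrt Real.pi/(2*s) * (2/Real.sqrt Real.pi * J)))
      = (2*r^3*Real.exp (-c*(r^2-m)^2))
        / (Real.sqrt Real.pi/(2*s) * (2/Real.sqrt Real.pi * J)) := fun r => by ring
  simp_rw [hrw]
  rw [MeasureTheory.integral_div, hkey, hF0, ← hs2]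
  field_simp
  ring
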